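/- The Coxeter group W(H_3) ≅ C_2 × Alt(5) has minimal faithful permutation degree 7. -/

import Mathlib

open Equiv Finset

namespace MuWH3

abbrev G := Multiplicative (ZMod 2) × ↥(alternatingGroup (Fin 5))

/-- commuting count is invariant under conjugation -/
lemma conj_comm_card (c x : Equiv.Perm (Fin 6)) :
    ((univ : Finset (Equiv.Perm (Fin 6))).filter fun y => (c * x * c⁻¹) * y = y * (c * x * c⁻¹)).card
      = ((univ : Finset (Equiv.Perm (Fin 6))).filter fun y => x * y = y * x).card := by
  apply Finset.card_nbij' (i := fun y => c⁻¹ * y * c) (j := fun y => c * y * c⁻¹)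
  · intro y hy
    simp only [mem_coe, mem_filter, mem_univ, true_and] at hy ⊢
    have := hy
    calc x * (c⁻¹ * y * c) = c⁻¹ * ((c * x * c⁻¹) * y) * c := by group
    _ = c⁻¹ * (y * (c * x * c⁻¹)) * c := by rw [hy]
    _ = (c⁻¹ * y * c) * x := by group
  · intro y hy
    simp only [mem_coe, mem_filter, mem_univ, true_and] at hy ⊢
    calc (c * x * c⁻¹) * (c * y * c⁻¹) = c * (x * y) * c⁻¹ := by group
    _ = c * (y * x) * c⁻¹ := by rw [hy]
    _ = (c * y * c⁻¹) * (c * x * c⁻¹) := by group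
  · intro y _; group
  · intro y _; group

def r1 : Equiv.Perm (Fin 6) := Equiv.swap 0 1
def r2 : Equiv.Perm (Fin 6) := Equiv.swap 0 1 * Equiv.swap 2 3
def r3 : Equiv.Perm (Fin 6) := Equiv.swap 0 1 * Equiv.swap 2 3 * Equiv.swap 4 5

lemma cycleType_swap {a b : Fin 6} (h : a ≠ b) :
    (Equiv.swap a b).cycleType = {2} := by
  rw [(Equiv.Perm.isCycle_swap h).cycleType, Equiv.Perm.support_swap h]
  simp [h]

lemma disjoint_aux {a b c d : Fin 6} (h : ∀ x : Fin 6, Equiv.swap a b x = x ∨ Equiv.swap c d x = x) :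
    (Equiv.swap a b).Disjoint (Equiv.swap c d) := h

lemma cycleType_r1 : r1.cycleType = Multiset.replicate 1 2 := by
  rw [r1, cycleType_swap (by decide)]; rfl

lemma cycleType_r2 : r2.cycleType = Multiset.replicate 2 2 := by
  have hd : (Equiv.swap (0:Fin 6) 1).Disjoint (Equiv.swap 2 3) := disjoint_aux (by decide)
  rw [r2, hd.cycleType_mul, cycleType_swap (by decide), cycleType_swap (by decide)]
  rfl

lemma cycleType_r3 : r3.cycleType = Multiset.replicate 3 2 := by
  have hd : (Equiv.swap (0:Fin 6) 1).Disjoint (Equiv.swap 2 3) := disjoint_aux (by decide)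
  have hd2 : (Equiv.swap (0:Fin 6) 1 * Equiv.swap 2 3).Disjoint (Equiv.swap 4 5) := by
    intro x; revert x; decide
  rw [r3, hd2.cycleType_mul, hd.cycleType_mul, cycleType_swap (by decide), cycleType_swap (by decide),
    cycleType_swap (by decide)]
  rfl

set_option maxRecDepth 100000 in
lemma card_r1 : ((univ : Finset (Equiv.Perm (Fin 6))).filter fun y => r1 * y = y * r1).card < 120 := by
  decide

set_option maxRecDepth 100000 in
lemma card_r2 : ((univ : Finset (Equiv.Perm (Fin 6))).filter fun y => r2 * y = y * r2).card < 120 := by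
  decide

set_option maxRecDepth 100000 in
lemma card_r3 : ((univ : Finset (Equiv.Perm (Fin 6))).filter fun y => r3 * y = y * r3).card < 120 := by
  decide

/-- Any involution in `S₆` has centralizer of size less than `120`. -/
lemma key (x : Equiv.Perm (Fin 6)) (hx1 : x ≠ 1) (hx2 : x * x = 1) :
    ((univ : Finset (Equiv.Perm (Fin 6))).filter fun y => x * y = y * x).card < 120 := by
  have ho : orderOf x = 2 := orderOf_eq_prime (by rwa [pow_two]) hx1
  obtain ⟨n, hn⟩ := Equiv.Perm.cycleType_prime_order (by rw [ho]; exact Nat.prime_two)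
  rw [ho] at hn
  have hsum : x.cycleType.sum = x.support.card := x.sum_cycleType
  have hle : x.support.card ≤ 6 := by
    simpa using Finset.card_le_univ x.support
  rw [hn, Multiset.sum_replicate, smul_eq_mul] at hsum
  have hn2 : n ≤ 2 := by omega
  have conj_case : ∀ r : Equiv.Perm (Fin 6), r.cycleType = Multiset.replicate (n + 1) 2 →
      ((univ : Finset (Equiv.Perm (Fin 6))).filter fun y => r * y = y * r).card < 120 →
      ((univ : Finset (Equiv.Perm (Fin 6))).filter fun y => x * y = y * x).card < 120 := by
    intro r hr hcard
    have hconj : IsConj r x := Equiv.Perm.isConj_of_cycleType_eq (by rw [hr, hn])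
    obtain ⟨c, hc⟩ := hconj
    have hx : (c : Equiv.Perm (Fin 6)) * r * (c : Equiv.Perm (Fin 6))⁻¹ = x := by
      rw [mul_inv_eq_iff_eq_mul]; exact hc
    rw [← hx, conj_comm_card]
    exact hcard
  interval_cases n
  · exact conj_case r1 cycleType_r1 card_r1
  · exact conj_case r2 cycleType_r2 card_r2
  · exact conj_case r3 cycleType_r3 card_r3

lemma cardG : Fintype.card G = 120 := by
  have h2 : 2 * Fintype.card ↥(alternatingGroup (Fin 5)) = Fintype.card (Equiv.Perm (Fin 5)) :=
    two_mul_card_alternatingGroup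
  have h5 : Fintype.card (Equiv.Perm (Fin 5)) = 120 := by
    rw [Fintype.card_perm]; decide
  have hA : Fintype.card ↥(alternatingGroup (Fin 5)) = 60 := by omega
  rw [Fintype.card_prod, hA]
  rfl

def z : G := (Multiplicative.ofAdd (1 : ZMod 2), 1)

lemma z_ne_one : z ≠ 1 := by decide

lemma z_sq : z * z = 1 := by decide

lemma z_central (g : G) : g * z = z * g := by
  simp [Prod.ext_iff, z, mul_comm]

lemma no6 : ¬ ∃ f : G →* Equiv.Perm (Fin 6), Function.Injective f := by
  rintro ⟨f, hf⟩
  set x := f z with hx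
  have hx1 : x ≠ 1 := by
    intro h
    have : f z = f 1 := by rw [map_one]; exact h
    exact z_ne_one (hf this)
  have hx2 : x * x = 1 := by rw [hx, ← map_mul, z_sq, map_one]
  have hsub : (univ : Finset G).image f ⊆
      (univ : Finset (Equiv.Perm (Fin 6))).filter fun y => x * y = y * x := by
    intro y hy
    obtain ⟨g, -, rfl⟩ := Finset.mem_image.mp hy
    refine Finset.mem_filter.mpr ⟨Finset.mem_univ _, ?_⟩
    rw [hx, ← map_mul, ← map_mul, ← z_central g]
  have hcard : ((univ : Finset G).image f).card = 120 := by
    rw [Finset.card_image_of_injective _ hf, Finset.card_univ, cardG]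
  have := Finset.card_le_card hsub
  rw [hcard] at this
  exact absurd (lt_of_le_of_lt this (key x hx1 hx2)) (by omega)

def h1 : Multiplicative (ZMod 2) →* Equiv.Perm (Fin 2) :=
  MonoidHom.mk' (fun a => if a = 1 then 1 else Equiv.swap 0 1) (by decide)

lemma h1_inj : Function.Injective h1 := by decide

noncomputable def f7 : G →* Equiv.Perm (Fin 7) :=
  (Equiv.Perm.viaEmbeddingHom finSumFinEquiv.toEmbedding).comp
    ((Equiv.Perm.sumCongrHom (Fin 2) (Fin 5)).comp
      (h1.prodMap (alternatingGroup (Fin 5)).subtype))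

lemma f7_inj : Function.Injective f7 := by
  apply Function.Injective.comp (Equiv.Perm.viaEmbeddingHom_injective _)
  apply Function.Injective.comp Equiv.Perm.sumCongrHom_injective
  rw [MonoidHom.coe_prodMap]
  exact Function.Injective.prodMap h1_inj (alternatingGroup (Fin 5)).subtype_injective

end MuWH3

/-- The minimal faithful permutation degree of a group `G`: the least `n`
such that `G` embeds into `Sym(n)`. -/
noncomputable def minFaithfulDegree (G : Type*) [Group G] : ℕ :=
  sInf {n : ℕ | ∃ f : G →* Equiv.Perm (Fin n), Function.Injective f}

/-- The Coxeter group `W(H₃) ≅ C₂ × Alt(5)` has minimal faithful permutation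
degree `7`. -/
theorem mu_WH3 :
    minFaithfulDegree (Multiplicative (ZMod 2) × ↥(alternatingGroup (Fin 5))) = 7 := by
  have h7 : 7 ∈ {n : ℕ | ∃ f : MuWH3.G →* Equiv.Perm (Fin n), Function.Injective f} :=
    ⟨MuWH3.f7, MuWH3.f7_inj⟩
  apply le_antisymm
  · exact Nat.sInf_le h7
  · apply le_csInf ⟨7, h7⟩
    rintro m ⟨f, hf⟩
    by_contra hlt
    push_neg at hlt
    have hm : m ≤ 6 := by omega
    apply MuWH3.no6
    refine ⟨(Equiv.Perm.viaEmbeddingHom (Fin.castLEEmb hm)).comp f, ?_⟩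
    apply Function.Injective.comp (Equiv.Perm.viaEmbeddingHom_injective _) hf
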